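/- For n ≥ 1, Σ_{k=1}^{n} C(n+k, k)·C(n−1, k−1)·σ^{k−1}·(1+σ)/(n+1) = Σ_{k=0}^{n} C(n+k, n−k)·Cat(k)·σ^k as polynomials in σ with rational coefficients. -/

import Mathlib

open Nat Polynomial Finset
lemma catalan_cast (j : ℕ) : (catalan j : ℚ) = ((2*j).choose j : ℚ) / (j+1) := by
  rw [eq_div_iff (by positivity)]
  have h2 : (j+1) * catalan j = (2*j).choose j := by
    rw [succ_mul_catalan_eq_centralBinom, centralBinom_eq_two_mul_choose]
  push_cast [← h2]; ring

lemma key (i l : ℕ) :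
    (((2*i+l+4).choose (i+2) * (i+l+1).choose (i+1) : ℚ)
      + ((2*i+l+3).choose (i+1) * (i+l+1).choose i : ℚ)) / (i+l+3)
    = ((2*i+l+3).choose (l+1) * catalan (i+1) : ℚ) := by
  rw [catalan_cast]
  rw [Nat.cast_choose ℚ (show i+2 ≤ 2*i+l+4 by omega),
      Nat.cast_choose ℚ (show i+1 ≤ i+l+1 by omega),
      Nat.cast_choose ℚ (show i+1 ≤ 2*i+l+3 by omega),
      Nat.cast_choose ℚ (show i ≤ i+l+1 by omega),
      Nat.cast_choose ℚ (show l+1 ≤ 2*i+l+3 by omega),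
      Nat.cast_choose ℚ (show i+1 ≤ 2*(i+1) by omega)]
  have e1 : 2*i+l+4 - (i+2) = i+l+2 := by omega
  have e2 : i+l+1 - (i+1) = l := by omega
  have e3 : 2*i+l+3 - (i+1) = i+l+2 := by omega
  have e4 : i+l+1 - i = l+1 := by omega
  have e5 : 2*i+l+3 - (l+1) = 2*i+2 := by omega
  have e6 : 2*(i+1) = 2*i+2 := by omega
  have e7 : 2*i+2 - (i+1) = i+1 := by omega
  rw [e1, e2, e3, e4, e5, e6, e7]
  have f1 : ((2*i+l+4)! : ℚ) = (2*i+l+4) * (2*i+l+3)! := by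
    rw [show 2*i+l+4 = (2*i+l+3)+1 from rfl, factorial_succ]; push_cast; ring
  have f2 : ((i+l+2)! : ℚ) = (i+l+2) * (i+l+1)! := by
    rw [show i+l+2 = (i+l+1)+1 from rfl, factorial_succ]; push_cast; ring
  have f3 : ((i+2)! : ℚ) = (i+2) * (i+1)! := by
    rw [show i+2 = (i+1)+1 from rfl, factorial_succ]; push_cast; ring
  have f4 : ((i+1)! : ℚ) = (i+1) * i ! := by
    rw [factorial_succ]; push_cast; ring
  have f5 : ((l+1)! : ℚ) = (l+1) * l ! := by
    rw [factorial_succ]; push_cast; ring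
  rw [f1, f2, f3, f4, f5]
  have p1 : (i ! : ℚ) ≠ 0 := by positivity
  have p2 : (l ! : ℚ) ≠ 0 := by positivity
  have p3 : ((i+l+1)! : ℚ) ≠ 0 := by positivity
  have p4 : ((2*i+l+3)! : ℚ) ≠ 0 := by positivity
  have p5 : ((2*i+2)! : ℚ) ≠ 0 := by positivity
  field_simp
  push_cast; ring

lemma key2 (n i : ℕ) (h1 : 1 ≤ i) (h2 : i + 1 ≤ n) :
    ((n+(i+1)).choose (i+1) * (n-1).choose i : ℚ)/((n:ℚ)+1)
      + ((n+i).choose i * (n-1).choose (i-1) : ℚ)/((n:ℚ)+1)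
    = ((n+i).choose (n-i) * catalan i : ℚ) := by
  obtain ⟨i', rfl⟩ : ∃ i', i = i'+1 := ⟨i-1, by omega⟩
  obtain ⟨l, rfl⟩ : ∃ l, n = i'+l+2 := ⟨n-i'-2, by omega⟩
  rw [← add_div]
  have := key i' l
  rw [show i'+l+2+(i'+1+1) = 2*i'+l+4 by ring,
      show i'+l+2-1 = i'+l+1 by omega,
      show i'+l+2+(i'+1) = 2*i'+l+3 by ring,
      show i'+1-1 = i' by omega,
      show i'+l+2-(i'+1) = l+1 by omega,
      show ((i'+l+2 : ℕ) : ℚ) + 1 = ((i'+l+3 : ℕ) : ℚ) by push_cast; ring]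
  convert this using 3
  push_cast; ring

theorem stmt12 (n : ℕ) (hn : 1 ≤ n) :
    ∑ k ∈ Finset.Icc 1 n,
        Polynomial.C ((Nat.choose (n + k) k * Nat.choose (n - 1) (k - 1) : ℚ) / ((n : ℚ) + 1)) *
          Polynomial.X ^ (k - 1) * (1 + Polynomial.X) =
    ∑ k ∈ Finset.range (n + 1),
        Polynomial.C ((Nat.choose (n + k) (n - k) * catalan k : ℚ)) * Polynomial.X ^ k := by
  set a : ℕ → ℚ := fun k => ((n+k).choose k * (n-1).choose (k-1) : ℚ) / ((n:ℚ)+1) with ha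
  have step1 : ∑ k ∈ Finset.Icc 1 n,
      Polynomial.C (a k) * Polynomial.X ^ (k - 1) * (1 + Polynomial.X)
      = (∑ k ∈ Finset.Icc 1 n, Polynomial.C (a k) * Polynomial.X ^ (k-1))
        + ∑ k ∈ Finset.Icc 1 n, Polynomial.C (a k) * Polynomial.X ^ k := by
    rw [← Finset.sum_add_distrib]
    refine Finset.sum_congr rfl fun k hk => ?_
    have hk1 : 1 ≤ k := (Finset.mem_Icc.mp hk).1
    rw [mul_add, mul_one, mul_assoc, ← pow_succ, show k-1+1 = k by omega]
  rw [step1]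
  have h1 : ∑ k ∈ Finset.Icc 1 n, Polynomial.C (a k) * Polynomial.X ^ (k-1)
      = ∑ i ∈ Finset.range (n+1), Polynomial.C (a (i+1)) * Polynomial.X ^ i := by
    rw [← Finset.Ico_add_one_right_eq_Icc, Finset.sum_Ico_eq_sum_range]
    rw [Finset.sum_range_succ]
    have hz : a (n+1) = 0 := by
      have h0 : (n-1).choose n = 0 := Nat.choose_eq_zero_of_lt (by omega)
      simp [ha, h0]
    rw [show n+1-1 = n from rfl, hz]
    simp only [map_zero, zero_mul, add_zero]
    refine Finset.sum_congr rfl fun i hi => ?_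
    rw [show 1+i = i+1 by ring, show i+1-1 = i from rfl]
  have h2 : ∑ k ∈ Finset.Icc 1 n, Polynomial.C (a k) * Polynomial.X ^ k
      = ∑ i ∈ Finset.range (n+1),
          (if i = 0 then 0 else Polynomial.C (a i) * Polynomial.X ^ i) := by
    rw [Finset.sum_range_succ' (fun i => if i = 0 then 0 else Polynomial.C (a i) * Polynomial.X ^ i)]
    simp only [Nat.succ_ne_zero, if_false, if_true, add_zero, reduceIte]
    rw [← Finset.Ico_add_one_right_eq_Icc, Finset.sum_Ico_eq_sum_range]
    rw [show n+1-1 = n from rfl]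
    refine Finset.sum_congr rfl fun i hi => ?_
    rw [show 1+i = i+1 by ring]
  rw [h1, h2, ← Finset.sum_add_distrib]
  refine Finset.sum_congr rfl fun i hi => ?_
  have hin : i ≤ n := by
    have := Finset.mem_range.mp hi; omega
  rcases eq_or_ne i 0 with rfl | hi0
  · simp only [if_pos rfl, add_zero]
    rw [show n - 0 = n from rfl]
    have h01 : a 1 = 1 := by
      rw [ha]
      simp only [Nat.choose_one_right, Nat.sub_self, Nat.choose_zero_right, Nat.cast_one, mul_one]
      rw [div_eq_one_iff_eq (by positivity)]
      push_cast; ring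
    rw [h01]
    simp [Nat.choose_self]
  · rw [if_neg hi0]
    rcases eq_or_ne i n with rfl | hlt
    · have hz : a (i+1) = 0 := by
        have h0 : (i-1).choose i = 0 := Nat.choose_eq_zero_of_lt (by omega)
        simp [ha, h0]
      rw [hz]
      simp only [map_zero, zero_mul, zero_add, Nat.sub_self, Nat.choose_zero_right,
        Nat.cast_one, one_mul]
      have hai : a i = (catalan i : ℚ) := by
        rw [ha]
        simp only [Nat.choose_self, Nat.cast_one, mul_one]
        rw [catalan_cast, two_mul]
      rw [hai]
    · have h1i : 1 ≤ i := by omega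
      have h2i : i + 1 ≤ n := by omega
      have hcoef : a (i+1) + a i = ((n+i).choose (n-i) * catalan i : ℚ) := by
        simp only [ha, Nat.add_sub_cancel]
        exact key2 n i h1i h2i
      rw [← add_mul, ← Polynomial.C_add, hcoef]
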